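/- (Gap analysis, Case 8: R12 ≤ R21, R13 ≤ R31, R23 ≤ R32.) Suppose the nonnegative rate tuple lies in C̲'_g and additionally R12 ≤ R21, R13 ≤ R31, R23 ≤ R32. Define α32^b = (2^{2R23+1}−1)/(2h3²P), α31^b = 2^{2R23+1}(2^{2R13+1}−1)/(2h3²P), α32^u = 2^{2R13+2R23+2}(2^{2(R32−R23)}−1)/(h3²P), α31^u = 2^{2R13+2R32+2}(2^{2(R31−R13)}−1)/(h3²P), α21^b = 2^{2R32+2R31+2}(2^{2R12+1}−1)/(2h2²P), α21^u = 2^{2R12+2R31+2R32+3}(2^{2(R21−R12)}−1)/(h2²P), and α23^b = (h3²/h2²)α32^b, α13^b = (h3²/h1²)α31^b, α12^b = (h2²/h1²)α21^b. Then α31^b+α32^b+α31^u+α32^u ≤ 1, α21^b+α23^b+α21^u ≤ 1, α12^b+α13^b ≤ 1, and (2^{2(R13+R23)}−1)/(h3²P) + 2^{2(R13+R23)}(2^{2(R32−R23+R12)}−1)/(h2²P) + 2^{2(R13+R32+R12)}(2^{2(R21−R12+R31−R13)}−1)/(h1²P) ≤ 1. -/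

import Mathlib

noncomputable def Cg (x : ℝ) : ℝ := (1 / 2) * Real.logb 2 (1 + x)

private lemma two_pos' : (0:ℝ) < 2 := by norm_num

private lemma one_le_mul' {a b : ℝ} (ha : 1 ≤ a) (hb : 1 ≤ b) : 1 ≤ a * b := by
  nlinarith

private lemma keylem (R x c k : ℝ) (hk : (2:ℝ) ^ (2*c) = k) (hx : 0 < 1 + x)
    (h : R ≤ Cg x - c) : (2:ℝ) ^ (2*R) * k ≤ 1 + x := by
  unfold Cg at h
  have h1 : 2*R + 2*c ≤ Real.logb 2 (1+x) := by linarith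
  calc (2:ℝ) ^ (2*R) * k = (2:ℝ) ^ (2*R + 2*c) := by rw [Real.rpow_add two_pos', hk]
    _ ≤ (2:ℝ) ^ (Real.logb 2 (1+x)) := Real.rpow_le_rpow_of_exponent_le one_le_two h1
    _ = 1 + x := Real.rpow_logb two_pos' (by norm_num) hx

set_option maxHeartbeats 1000000 in
theorem stmt_18
    (P h1 h2 h3 : ℝ) (hP : 0 < P)
    (hh12 : h2 ^ 2 ≤ h1 ^ 2) (hh23 : h3 ^ 2 ≤ h2 ^ 2) (hh3 : 0 < h3 ^ 2)
    (R12 R13 R21 R23 R31 R32 : ℝ)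
    (hr12 : 0 ≤ R12) (hr13 : 0 ≤ R13) (hr21 : 0 ≤ R21)
    (hr23 : 0 ≤ R23) (hr31 : 0 ≤ R31) (hr32 : 0 ≤ R32)
    (hG1 : R31 + R32 ≤ Cg (h3 ^ 2 * P) - 2)
    (hG2 : R13 + R23 ≤ Cg (h3 ^ 2 * P) - 2)
    (hG3 : R12 + R13 + R32 ≤ Cg (h2 ^ 2 * P + h3 ^ 2 * P) - 3)
    (hG4 : R13 + R23 + R12 ≤ Cg (h2 ^ 2 * P + h3 ^ 2 * P) - 3)
    (hG5 : R12 + R31 + R32 ≤ Cg (h1 ^ 2 * P + h2 ^ 2 * P) - 3)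
    (hG6 : R13 + R23 + R21 ≤ Cg (h1 ^ 2 * P + h3 ^ 2 * P) - 3)
    (hG7 : R21 + R31 + R23 ≤ Cg ((|h2| + |h3|) ^ 2 * P) - 7 / 2)
    (hG8 : R21 + R31 + R32 ≤ Cg ((|h2| + |h3|) ^ 2 * P) - 7 / 2)
    (hc1 : R12 ≤ R21) (hc2 : R13 ≤ R31) (hc3 : R23 ≤ R32)
    (a32b a31b a32u a31u a21b a21u a23b a13b a12b : ℝ)
    (ha32b : a32b = ((2:ℝ) ^ (2 * R23 + 1) - 1) / (2 * h3 ^ 2 * P))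
    (ha31b : a31b = (2:ℝ) ^ (2 * R23 + 1) * ((2:ℝ) ^ (2 * R13 + 1) - 1) / (2 * h3 ^ 2 * P))
    (ha32u : a32u = (2:ℝ) ^ (2 * R13 + 2 * R23 + 2) * ((2:ℝ) ^ (2 * (R32 - R23)) - 1) / (h3 ^ 2 * P))
    (ha31u : a31u = (2:ℝ) ^ (2 * R13 + 2 * R32 + 2) * ((2:ℝ) ^ (2 * (R31 - R13)) - 1) / (h3 ^ 2 * P))
    (ha21b : a21b = (2:ℝ) ^ (2 * R32 + 2 * R31 + 2) * ((2:ℝ) ^ (2 * R12 + 1) - 1) / (2 * h2 ^ 2 * P))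
    (ha21u : a21u = (2:ℝ) ^ (2 * R12 + 2 * R31 + 2 * R32 + 3) * ((2:ℝ) ^ (2 * (R21 - R12)) - 1) / (h2 ^ 2 * P))
    (ha23b : a23b = h3 ^ 2 / h2 ^ 2 * a32b)
    (ha13b : a13b = h3 ^ 2 / h1 ^ 2 * a31b)
    (ha12b : a12b = h2 ^ 2 / h1 ^ 2 * a21b) :
    a31b + a32b + a31u + a32u ≤ 1 ∧
    a21b + a23b + a21u ≤ 1 ∧
    a12b + a13b ≤ 1 ∧
    ((2:ℝ) ^ (2 * (R13 + R23)) - 1) / (h3 ^ 2 * P)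
      + (2:ℝ) ^ (2 * (R13 + R23)) * ((2:ℝ) ^ (2 * (R32 - R23 + R12)) - 1) / (h2 ^ 2 * P)
      + (2:ℝ) ^ (2 * (R13 + R32 + R12)) * ((2:ℝ) ^ (2 * (R21 - R12 + R31 - R13)) - 1) / (h1 ^ 2 * P) ≤ 1 := by
  have hh2 : 0 < h2 ^ 2 := lt_of_lt_of_le hh3 hh23
  have hh1 : 0 < h1 ^ 2 := lt_of_lt_of_le hh2 hh12
  have hS : (|h2| + |h3|) ^ 2 * P ≤ 4 * (h2 ^ 2 * P) := by
    have habs : |h3| ≤ |h2| := by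
      rw [← Real.sqrt_sq_eq_abs, ← Real.sqrt_sq_eq_abs]
      exact Real.sqrt_le_sqrt hh23
    have h1' : (|h2| + |h3|) ^ 2 ≤ 4 * h2 ^ 2 := by
      calc (|h2| + |h3|) ^ 2 ≤ (|h2| + |h2|) ^ 2 := by
            apply pow_le_pow_left₀ (by positivity) (by linarith)
        _ = 4 * h2 ^ 2 := by
            rw [show |h2| + |h2| = 2 * |h2| by ring, mul_pow, sq_abs]; norm_num
    have := mul_le_mul_of_nonneg_right h1' hP.le
    linarith only [this]
  obtain ⟨A, hA⟩ : ∃ x : ℝ, x = (2:ℝ) ^ (2 * R12) := ⟨_, rfl⟩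
  obtain ⟨B, hB⟩ : ∃ x : ℝ, x = (2:ℝ) ^ (2 * R13) := ⟨_, rfl⟩
  obtain ⟨C, hC⟩ : ∃ x : ℝ, x = (2:ℝ) ^ (2 * R21) := ⟨_, rfl⟩
  obtain ⟨D, hD⟩ : ∃ x : ℝ, x = (2:ℝ) ^ (2 * R23) := ⟨_, rfl⟩
  obtain ⟨E, hE⟩ : ∃ x : ℝ, x = (2:ℝ) ^ (2 * R31) := ⟨_, rfl⟩
  obtain ⟨F, hF⟩ : ∃ x : ℝ, x = (2:ℝ) ^ (2 * R32) := ⟨_, rfl⟩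
  have hA1 : 1 ≤ A := hA ▸ Real.one_le_rpow one_le_two (by linarith)
  have hB1 : 1 ≤ B := hB ▸ Real.one_le_rpow one_le_two (by linarith)
  have hC1 : 1 ≤ C := hC ▸ Real.one_le_rpow one_le_two (by linarith)
  have hD1 : 1 ≤ D := hD ▸ Real.one_le_rpow one_le_two (by linarith)
  have hE1 : 1 ≤ E := hE ▸ Real.one_le_rpow one_le_two (by linarith)
  have hF1 : 1 ≤ F := hF ▸ Real.one_le_rpow one_le_two (by linarith)
  have hA0 : (0:ℝ) < A := by linarith
  have hB0 : (0:ℝ) < B := by linarith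
  have hD0 : (0:ℝ) < D := by linarith
  have k16 : (2:ℝ) ^ (2*(2:ℝ)) = 16 := by
    rw [show (2:ℝ)*2 = ((4:ℕ):ℝ) by norm_num, Real.rpow_natCast]; norm_num
  have k64 : (2:ℝ) ^ (2*(3:ℝ)) = 64 := by
    rw [show (2:ℝ)*3 = ((6:ℕ):ℝ) by norm_num, Real.rpow_natCast]; norm_num
  have k128 : (2:ℝ) ^ (2*(7/2:ℝ)) = 128 := by
    rw [show (2:ℝ)*(7/2) = ((7:ℕ):ℝ) by norm_num, Real.rpow_natCast]; norm_num
  have c1 : (2:ℝ) ^ (1:ℝ) = 2 := Real.rpow_one 2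
  have c2 : (2:ℝ) ^ (2:ℝ) = 4 := by
    rw [show (2:ℝ) = ((2:ℕ):ℝ) by norm_num, Real.rpow_natCast]; norm_num
  have c3 : (2:ℝ) ^ (3:ℝ) = 8 := by
    rw [show (3:ℝ) = ((3:ℕ):ℝ) by norm_num, Real.rpow_natCast]; norm_num
  -- exponential forms of the rate constraints
  have F1 : E * F * 16 ≤ 1 + h3 ^ 2 * P := by
    have := keylem _ _ _ _ k16 (by positivity) hG1
    rwa [show 2*(R31+R32) = 2*R31 + 2*R32 by ring, Real.rpow_add two_pos', ← hE, ← hF] at this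
  have F2 : B * D * 16 ≤ 1 + h3 ^ 2 * P := by
    have := keylem _ _ _ _ k16 (by positivity) hG2
    rwa [show 2*(R13+R23) = 2*R13 + 2*R23 by ring, Real.rpow_add two_pos', ← hB, ← hD] at this
  have F3 : A * B * F * 64 ≤ 1 + (h2 ^ 2 * P + h3 ^ 2 * P) := by
    have := keylem _ _ _ _ k64 (by positivity) hG3
    rwa [show 2*(R12+R13+R32) = 2*R12 + 2*R13 + 2*R32 by ring, Real.rpow_add two_pos',
      Real.rpow_add two_pos', ← hA, ← hB, ← hF] at this
  have F5 : A * E * F * 64 ≤ 1 + (h1 ^ 2 * P + h2 ^ 2 * P) := by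
    have := keylem _ _ _ _ k64 (by positivity) hG5
    rwa [show 2*(R12+R31+R32) = 2*R12 + 2*R31 + 2*R32 by ring, Real.rpow_add two_pos',
      Real.rpow_add two_pos', ← hA, ← hE, ← hF] at this
  have F7 : C * E * D * 128 ≤ 1 + (|h2| + |h3|) ^ 2 * P := by
    have := keylem _ _ _ _ k128 (by positivity) hG7
    rwa [show 2*(R21+R31+R23) = 2*R21 + 2*R31 + 2*R23 by ring, Real.rpow_add two_pos',
      Real.rpow_add two_pos', ← hC, ← hE, ← hD] at this
  have F8 : C * E * F * 128 ≤ 1 + (|h2| + |h3|) ^ 2 * P := by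
    have := keylem _ _ _ _ k128 (by positivity) hG8
    rwa [show 2*(R21+R31+R32) = 2*R21 + 2*R31 + 2*R32 by ring, Real.rpow_add two_pos',
      Real.rpow_add two_pos', ← hC, ← hE, ← hF] at this
  -- clean forms of the power-allocation parameters
  have Eb32 : a32b = (2*D - 1) / (2 * h3 ^ 2 * P) := by
    rw [ha32b, Real.rpow_add two_pos', c1, ← hD]; ring
  have Eb31 : a31b = (2*D * (2*B - 1)) / (2 * h3 ^ 2 * P) := by
    rw [ha31b, Real.rpow_add two_pos', Real.rpow_add two_pos', c1, ← hD, ← hB]; ring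
  have Eu32 : a32u = (4*B*F - 4*B*D) / (h3 ^ 2 * P) := by
    rw [ha32u, show 2*R13 + 2*R23 + 2 = 2*R13 + (2*R23 + (2:ℝ)) by ring,
      Real.rpow_add two_pos', Real.rpow_add two_pos', c2,
      show 2*(R32 - R23) = 2*R32 - 2*R23 by ring, Real.rpow_sub two_pos', ← hB, ← hD, ← hF]
    rw [div_eq_div_iff (by positivity) (by positivity)]
    field_simp
  have Eu31 : a31u = (4*E*F - 4*B*F) / (h3 ^ 2 * P) := by
    rw [ha31u, show 2*R13 + 2*R32 + 2 = 2*R13 + (2*R32 + (2:ℝ)) by ring,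
      Real.rpow_add two_pos', Real.rpow_add two_pos', c2,
      show 2*(R31 - R13) = 2*R31 - 2*R13 by ring, Real.rpow_sub two_pos', ← hB, ← hE, ← hF]
    rw [div_eq_div_iff (by positivity) (by positivity)]
    field_simp
  have Eb21 : a21b = (4*E*F * (2*A - 1)) / (2 * h2 ^ 2 * P) := by
    rw [ha21b, show 2*R32 + 2*R31 + 2 = 2*R32 + (2*R31 + (2:ℝ)) by ring,
      Real.rpow_add two_pos', Real.rpow_add two_pos', c2,
      Real.rpow_add two_pos', c1, ← hA, ← hE, ← hF]
    ring
  have Eu21 : a21u = (8*C*E*F - 8*A*E*F) / (h2 ^ 2 * P) := by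
    rw [ha21u, show 2*R12 + 2*R31 + 2*R32 + 3 = 2*R12 + (2*R31 + (2*R32 + (3:ℝ))) by ring,
      Real.rpow_add two_pos', Real.rpow_add two_pos', Real.rpow_add two_pos', c3,
      show 2*(R21 - R12) = 2*R21 - 2*R12 by ring, Real.rpow_sub two_pos',
      ← hA, ← hC, ← hE, ← hF]
    rw [div_eq_div_iff (by positivity) (by positivity)]
    field_simp
  refine ⟨?_, ?_, ?_, ?_⟩
  · -- relay 3 uplink sum
    have hBD : (1:ℝ) ≤ B*D := one_le_mul' hB1 hD1
    have hp3 : 0 < h3 ^ 2 * P := by positivity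
    have key1 : 8*E*F - 4*B*D - 1 ≤ 2 * (h3 ^ 2 * P) := by linarith only [F1, hBD, hp3]
    have heq : a31b + a32b + a31u + a32u = (8*E*F - 4*B*D - 1) / (2 * (h3 ^ 2 * P)) := by
      rw [Eb31, Eb32, Eu31, Eu32]; field_simp; ring
    rw [heq, div_le_one (by positivity)]
    exact key1
  · have hCE : (1:ℝ) ≤ C*E := one_le_mul' hC1 hE1
    have hD7 : D ≤ C * E * D := le_mul_of_one_le_left (by linarith only [hD1]) hCE
    have hAEF : (1:ℝ) ≤ A*E*F := one_le_mul' (one_le_mul' hA1 hE1) hF1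
    have hEF : (1:ℝ) ≤ E*F := one_le_mul' hE1 hF1
    have hp2 : 0 < h2 ^ 2 * P := by positivity
    have key2 : 16*C*E*F - 8*A*E*F - 4*E*F + 2*D - 1 ≤ 2 * (h2 ^ 2 * P) := by
      linarith only [F8, F7, hD7, hAEF, hEF, hS, hp2]
    have heq : a21b + a23b + a21u
        = (16*C*E*F - 8*A*E*F - 4*E*F + 2*D - 1) / (2 * (h2 ^ 2 * P)) := by
      rw [Eb21, ha23b, Eb32, Eu21]; have h3ne : h3 ≠ 0 := (fun h => by simp [h] at hh3); have h2ne : h2 ≠ 0 := (fun h => by simp [h] at hh2); field_simp; ring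
    rw [heq, div_le_one (by positivity)]
    exact key2
  · have hEF : (1:ℝ) ≤ E*F := one_le_mul' hE1 hF1
    have hp1 : 0 < h1 ^ 2 * P := by positivity
    have hp21 : h2 ^ 2 * P ≤ h1 ^ 2 * P := mul_le_mul_of_nonneg_right hh12 hP.le
    have hp32 : h3 ^ 2 * P ≤ h2 ^ 2 * P := mul_le_mul_of_nonneg_right hh23 hP.le
    have key3 : 8*A*E*F - 4*E*F + 4*B*D - 2*D ≤ 2 * (h1 ^ 2 * P) := by
      linarith only [F5, F2, hEF, hD1, hp21, hp32, hp1]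
    have heq : a12b + a13b = (8*A*E*F - 4*E*F + 4*B*D - 2*D) / (2 * (h1 ^ 2 * P)) := by
      rw [ha12b, ha13b, Eb21, Eb31]; have h3ne : h3 ≠ 0 := (fun h => by simp [h] at hh3); have h2ne : h2 ≠ 0 := (fun h => by simp [h] at hh2); field_simp; ring
    rw [heq, div_le_one (by positivity)]
    exact key3
  · -- downlink
    have hp3 : 0 < h3 ^ 2 * P := by positivity
    have hp2 : 0 < h2 ^ 2 * P := by positivity
    have hp1 : 0 < h1 ^ 2 * P := by positivity
    have heq : ((2:ℝ) ^ (2 * (R13 + R23)) - 1) / (h3 ^ 2 * P)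
      + (2:ℝ) ^ (2 * (R13 + R23)) * ((2:ℝ) ^ (2 * (R32 - R23 + R12)) - 1) / (h2 ^ 2 * P)
      + (2:ℝ) ^ (2 * (R13 + R32 + R12)) * ((2:ℝ) ^ (2 * (R21 - R12 + R31 - R13)) - 1) / (h1 ^ 2 * P)
      = (B*D - 1) / (h3 ^ 2 * P) + (A*B*F - B*D) / (h2 ^ 2 * P)
        + (C*E*F - A*B*F) / (h1 ^ 2 * P) := by
      rw [show 2*(R13+R23) = 2*R13 + 2*R23 by ring,
        show 2*(R32 - R23 + R12) = 2*R32 - 2*R23 + 2*R12 by ring,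
        show 2*(R13 + R32 + R12) = 2*R13 + 2*R32 + 2*R12 by ring,
        show 2*(R21 - R12 + R31 - R13) = 2*R21 - 2*R12 + 2*R31 - 2*R13 by ring]
      simp only [Real.rpow_add two_pos', Real.rpow_sub two_pos', ← hA, ← hB, ← hC, ← hD,
        ← hE, ← hF]
      field_simp
    rw [heq]
    have hBD : (1:ℝ) ≤ B*D := one_le_mul' hB1 hD1
    have hABF : (1:ℝ) ≤ A*B*F := one_le_mul' (one_le_mul' hA1 hB1) hF1
    have h23P : h3 ^ 2 * P ≤ h2 ^ 2 * P := mul_le_mul_of_nonneg_right hh23 hP.le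
    have h21P : h2 ^ 2 * P ≤ h1 ^ 2 * P := mul_le_mul_of_nonneg_right hh12 hP.le
    have t1 : (B*D - 1) / (h3 ^ 2 * P) ≤ 1/16 := by
      rw [div_le_iff₀ hp3]; linarith only [F2, hp3]
    have t2 : (A*B*F - B*D) / (h2 ^ 2 * P) ≤ 1/32 := by
      rw [div_le_iff₀ hp2]; linarith only [F3, hBD, h23P, hp2]
    have t3 : (C*E*F - A*B*F) / (h1 ^ 2 * P) ≤ 1/32 := by
      rw [div_le_iff₀ hp1]; linarith only [F8, hS, hABF, h21P, hp1]
    linarith only [t1, t2, t3]
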